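/- arXiv:2510.17226 — 5 statements merged into one kernel-verified Lean document; each statement's English description precedes it below -/
import Mathlib

section
/- Let M = (I − (I−R)P)^{-1} R with R diagonal with entries in (0,1] and P row-stochastic nonnegative. Then all entries of M lie in [0,1]. -/
open Matrix

section Analytic

attribute [local instance] Matrix.linftyOpNormedRing

/-- If `Q` is entrywise nonnegative with all row sums `< 1`, then `1 - Q` is invertible and
its inverse is entrywise nonnegative. -/
lemma aux_inv_nonneg {n : ℕ} (Q : Matrix (Fin n) (Fin n) ℝ)
    (hQnonneg : ∀ a b, 0 ≤ Q a b) (hQrow : ∀ a, ∑ b, Q a b < 1) :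
    IsUnit (1 - Q).det ∧ ∀ a b, 0 ≤ (1 - Q)⁻¹ a b := by
  haveI : CompleteSpace (Matrix (Fin n) (Fin n) ℝ) :=
    (by infer_instance : CompleteSpace (Fin n → Fin n → ℝ))
  haveI : HasSummableGeomSeries (Matrix (Fin n) (Fin n) ℝ) :=
    @instHasSummableGeomSeriesOfCompleteSpace _ _ this
  have hnorm : ‖Q‖ < 1 := by
    rw [Matrix.linfty_opNorm_def, ← NNReal.coe_one, NNReal.coe_lt_coe]
    refine (Finset.sup_lt_iff (by norm_num)).mpr ?_
    intro a _
    rw [← NNReal.coe_lt_coe]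
    have hco : ((∑ b, ‖Q a b‖₊ : NNReal) : ℝ) = ∑ b, Q a b := by
      push_cast
      exact Finset.sum_congr rfl fun b _ => abs_of_nonneg (hQnonneg a b)
    rw [hco]
    simpa using hQrow a
  have hsum : HasSum (fun k : ℕ => Q ^ k) (Ring.inverse (1 - Q)) :=
    hasSum_geom_series_inverse Q hnorm
  have key : ∀ a b, HasSum (fun k : ℕ => (Q ^ k) a b) ((Ring.inverse (1 - Q)) a b) := by
    intro a b
    let f : Matrix (Fin n) (Fin n) ℝ →ₗ[ℝ] ℝ :=
      { toFun := fun A => A a b, map_add' := fun _ _ => rfl, map_smul' := fun _ _ => rfl }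
    have hbound : ∀ A : Matrix (Fin n) (Fin n) ℝ, ‖f A‖ ≤ 1 * ‖A‖ := by
      intro A
      rw [one_mul]
      have h1 : ‖A a b‖₊ ≤ ∑ c, ‖A a c‖₊ := by
        apply Finset.single_le_sum _ (Finset.mem_univ b)
        intro c _
        exact zero_le
      have h2 : (∑ c, ‖A a c‖₊) ≤ ‖A‖₊ := by
        rw [Matrix.linfty_opNNNorm_def]
        exact Finset.le_sup (f := fun i => ∑ c, ‖A i c‖₊) (Finset.mem_univ a)
      exact_mod_cast h1.trans h2
    exact (f.mkContinuous 1 hbound).hasSum hsum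
  have hpow : ∀ (k : ℕ) (a b : Fin n), 0 ≤ (Q ^ k) a b := by
    intro k
    induction k with
    | zero =>
      intro a b
      rw [pow_zero]
      by_cases h : a = b <;> simp [Matrix.one_apply, h]
    | succ k ih =>
      intro a b
      rw [pow_succ', Matrix.mul_apply]
      exact Finset.sum_nonneg fun c _ => mul_nonneg (hQnonneg a c) (ih c b)
  have hBnonneg : ∀ a b, 0 ≤ (Ring.inverse (1 - Q)) a b := by
    intro a b
    exact hasSum_le (fun k => hpow k a b) hasSum_zero (key a b)
  have hunit : IsUnit (1 - Q) := isUnit_one_sub_of_norm_lt_one hnorm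
  have hdet : IsUnit (1 - Q).det := (Matrix.isUnit_iff_isUnit_det _).mp hunit
  refine ⟨hdet, ?_⟩
  rw [Matrix.nonsing_inv_eq_ringInverse]
  exact hBnonneg

end Analytic

theorem stmt_2 {n : ℕ} (α : Fin n → ℝ) (hα : ∀ i, 0 < α i ∧ α i ≤ 1)
    (P : Matrix (Fin n) (Fin n) ℝ) (hP : ∀ i j, 0 ≤ P i j)
    (hrow : ∀ i, ∑ j, P i j = 1)
    (R : Matrix (Fin n) (Fin n) ℝ) (hR : R = Matrix.diagonal α)
    (M : Matrix (Fin n) (Fin n) ℝ) (hM : M = (1 - (1 - R) * P)⁻¹ * R) :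
    ∀ i j, 0 ≤ M i j ∧ M i j ≤ 1 := by
  set Q : Matrix (Fin n) (Fin n) ℝ := (1 - R) * P with hQ
  have hQentry : ∀ a b, Q a b = (1 - α a) * P a b := by
    intro a b
    rw [hQ, hR, Matrix.sub_mul, Matrix.one_mul, Matrix.sub_apply, Matrix.diagonal_mul]
    ring
  have hQnonneg : ∀ a b, 0 ≤ Q a b := by
    intro a b
    rw [hQentry]
    exact mul_nonneg (by linarith [(hα a).2]) (hP a b)
  have hQrow : ∀ a, ∑ b, Q a b = 1 - α a := by
    intro a
    simp_rw [hQentry, ← Finset.mul_sum, hrow, mul_one]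
  obtain ⟨hdet, hBnonneg⟩ := aux_inv_nonneg Q hQnonneg
    (fun a => by rw [hQrow]; linarith [(hα a).1])
  set B : Matrix (Fin n) (Fin n) ℝ := (1 - Q)⁻¹ with hBdef
  have hBmul : B * (1 - Q) = 1 := Matrix.nonsing_inv_mul _ hdet
  have hMentry : ∀ a b, M a b = B a b * α b := by
    intro a b
    rw [hM, hR, Matrix.mul_diagonal]
  have hMnonneg : ∀ a b, 0 ≤ M a b := fun a b =>
    (hMentry a b) ▸ mul_nonneg (hBnonneg a b) (hα b).1.le
  have hMrow : ∀ a, ∑ b, M a b = 1 := by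
    intro a
    have h1 : ∑ b, (B * (1 - Q)) a b = 1 := by
      rw [hBmul]
      simp [Matrix.one_apply]
    have h2 : ∑ b, (B * (1 - Q)) a b = ∑ c, B a c * α c := by
      calc ∑ b, (B * (1 - Q)) a b = ∑ b, ∑ c, B a c * (1 - Q) c b := by
            simp_rw [Matrix.mul_apply]
        _ = ∑ c, ∑ b, B a c * (1 - Q) c b := Finset.sum_comm
        _ = ∑ c, B a c * ∑ b, (1 - Q) c b := by simp_rw [← Finset.mul_sum]
        _ = ∑ c, B a c * α c := by
            refine Finset.sum_congr rfl fun c _ => ?_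
            congr 1
            simp_rw [Matrix.sub_apply, Finset.sum_sub_distrib, hQrow c]
            simp [Matrix.one_apply]
    simp_rw [hMentry]
    rw [← h2]
    exact h1
  intro i j
  refine ⟨hMnonneg i j, ?_⟩
  calc M i j ≤ ∑ b, M i b :=
        Finset.single_le_sum (fun b _ => hMnonneg i b) (Finset.mem_univ j)
    _ = 1 := hMrow i
end

section
/- Let â approximate a with uniform relative error 0 < a(i) − â(i) ≤ ε_b a(i) for all i ∈ V, where ε_b ∈ (0,1), and all a(i) > 0. If â(i) ≥ â_{<k+1>}/(1−ε_b), then i belongs to an optimal size-k set maximizing Σ_{j∈T} a(j). -/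
/-- The `j`-th largest value of `f` (1-indexed): the element at position
`card V - j` of the values of `f` sorted in ascending order. -/
noncomputable def kthLargest {V : Type*} [Fintype V] (f : V → ℝ) (j : ℕ) : ℝ :=
  ((Finset.univ.val.map f).sort (· ≤ ·)).getD (Fintype.card V - j) 0

lemma kthLargest_mem {V : Type*} [Fintype V] (f : V → ℝ) (j : ℕ) (hj : j ≠ 0)
    (h : j ≤ Fintype.card V) : ∃ v, f v = kthLargest f j := by
  set l := ((Finset.univ.val.map f).sort (· ≤ ·)) with hl
  have hlen : l.length = Fintype.card V := by
    rw [hl, Multiset.length_sort, Multiset.card_map]; simp [Finset.card_univ]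
  have hidx : Fintype.card V - j < l.length := by
    rw [hlen]; omega
  have heq : kthLargest f j = l[Fintype.card V - j] := by
    rw [kthLargest, List.getD_eq_getElem _ _ (by rwa [← hl])]
  have hmem : l[Fintype.card V - j] ∈ l := List.getElem_mem _
  obtain ⟨v, _, hv⟩ := Multiset.mem_map.mp ((Multiset.mem_sort (α := ℝ) (· ≤ ·)).mp hmem)
  exact ⟨v, by rw [heq, hv]⟩

lemma card_gt_kthLargest {V : Type*} [Fintype V] (f : V → ℝ) (k : ℕ)
    (h : k + 1 ≤ Fintype.card V) :
    (Finset.univ.filter (fun v => kthLargest f (k + 1) < f v)).card ≤ k := by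
  classical
  set n := Fintype.card V
  set l := ((Finset.univ.val.map f).sort (· ≤ ·)) with hl
  have hlen : l.length = n := by
    rw [hl, Multiset.length_sort, Multiset.card_map]; simp [Finset.card_univ, n]
  have hidx : n - (k+1) < l.length := by rw [hlen]; omega
  set θ := kthLargest f (k+1) with hθ
  have hget : θ = l[n - (k+1)] := by
    rw [hθ, kthLargest, List.getD_eq_getElem _ _ (by rwa [← hl])]
  have hsorted : l.Pairwise (· ≤ ·) := Multiset.pairwise_sort _ _
  -- count
  have hcount : (Finset.univ.filter (fun v => θ < f v)).card
      = Multiset.countP (fun x => θ < x) (Finset.univ.val.map f) := by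
    rw [Multiset.countP_map]
    rfl
  have hcount2 : Multiset.countP (fun x => θ < x) (Finset.univ.val.map f)
      = l.countP (fun x => decide (θ < x)) := by
    rw [← Multiset.sort_eq (Finset.univ.val.map f) (· ≤ ·), ← hl, Multiset.coe_countP]
  rw [hcount, hcount2]
  have hsplit := List.take_append_drop (n - k) l
  calc l.countP (fun x => decide (θ < x))
      = (l.take (n-k)).countP (fun x => decide (θ < x))
        + (l.drop (n-k)).countP (fun x => decide (θ < x)) := by
        conv_lhs => rw [← hsplit]
        rw [List.countP_append]
    _ ≤ 0 + (l.drop (n-k)).length := by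
        gcongr
        · rw [Nat.le_zero, List.countP_eq_zero]
          intro x hx
          simp only [decide_eq_true_eq, not_lt]
          rw [List.mem_take_iff_getElem] at hx
          obtain ⟨m, hm, rfl⟩ := hx
          rw [hget]
          have hm' : m ≤ n - (k+1) := by omega
          exact hsorted.rel_get_of_le (a := ⟨m, by omega⟩) (b := ⟨n-(k+1), hidx⟩) hm'
        · exact List.countP_le_length
    _ ≤ k := by rw [List.length_drop, hlen]; omega

theorem stmt_9 {V : Type*} [Fintype V] [DecidableEq V]
    (k : ℕ) (hcard : k + 1 ≤ Fintype.card V)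
    (a aHat : V → ℝ) (ha : ∀ i, 0 < a i)
    (εb : ℝ) (hεb : 0 < εb ∧ εb < 1)
    (herr : ∀ i, 0 < a i - aHat i ∧ a i - aHat i ≤ εb * a i)
    (i : V) (hi : aHat i ≥ kthLargest aHat (k + 1) / (1 - εb)) :
    ∃ T : Finset V, T.card = k ∧
      (∀ U : Finset V, U.card = k → ∑ v ∈ U, a v ≤ ∑ v ∈ T, a v) ∧
      i ∈ T := by
  classical
  obtain ⟨hε0, hε1⟩ := hεb
  have h1ε : (0:ℝ) < 1 - εb := by linarith
  set θ := kthLargest aHat (k+1) with hθdef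
  have haHat : ∀ v, (1 - εb) * a v ≤ aHat v ∧ aHat v < a v := by
    intro v; obtain ⟨h1, h2⟩ := herr v
    constructor <;> nlinarith [ha v]
  have hθpos : 0 < θ := by
    obtain ⟨v, hv⟩ := kthLargest_mem aHat (k+1) (by omega) hcard
    have h : θ = aHat v := by rw [hθdef, hv]
    rw [h]
    nlinarith [(haHat v).1, ha v]
  rw [ge_iff_le, div_le_iff₀ h1ε] at hi
  have hiθ : θ < aHat i := by nlinarith
  set S := Finset.univ.filter (fun v => θ < aHat v) with hSdef
  have hScard : S.card ≤ k := card_gt_kthLargest aHat k hcard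
  have hiS : i ∈ S := by simp [hSdef, hiθ]
  have hk1 : 1 ≤ k := by
    rcases Nat.eq_zero_or_pos k with hk | hk
    · exfalso
      rw [hk, Nat.le_zero, Finset.card_eq_zero] at hScard
      rw [hScard] at hiS; exact absurd hiS (Finset.notMem_empty i)
    · exact hk
  -- key claim: any k-set not containing i has an element with value ≤ a i
  have hclaim : ∀ U : Finset V, U.card = k → i ∉ U → ∃ u ∈ U, a u ≤ a i := by
    intro U hU hiU
    by_contra hcon
    push_neg at hcon
    have hsub : U ⊆ S.erase i := by
      intro u hu
      have hau : a i < a u := hcon u hu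
      have h1 : θ < aHat u := by
        nlinarith [(haHat u).1, (haHat i).2, mul_lt_mul_of_pos_left (haHat i).2 h1ε,
          mul_lt_mul_of_pos_left hau h1ε]
      refine Finset.mem_erase.mpr ⟨?_, by simp [hSdef, h1]⟩
      rintro rfl; exact hiU hu
    have := Finset.card_le_card hsub
    rw [hU, Finset.card_erase_of_mem hiS] at this
    omega
  -- pick a maximizer among k-sets containing i
  obtain ⟨T0, hT0i, -, hT0card⟩ :=
    Finset.exists_subsuperset_card_eq (n := k) (Finset.subset_univ {i})
      (by simpa using hk1) (by rw [Finset.card_univ]; omega)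
  set C := (Finset.univ.powersetCard k).filter (fun T => i ∈ T) with hCdef
  have hCne : C.Nonempty := by
    refine ⟨T0, ?_⟩
    simp only [hCdef, Finset.mem_filter, Finset.mem_powersetCard_univ]
    exact ⟨hT0card, hT0i (Finset.mem_singleton_self i)⟩
  obtain ⟨T, hTC, hTmax⟩ := C.exists_max_image (fun T => ∑ v ∈ T, a v) hCne
  simp only [hCdef, Finset.mem_filter, Finset.mem_powersetCard_univ] at hTC
  obtain ⟨hTcard, hTi⟩ := hTC
  refine ⟨T, hTcard, ?_, hTi⟩
  intro U hU
  by_cases hiU : i ∈ U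
  · exact hTmax U (by simp [hCdef, Finset.mem_powersetCard_univ, hU, hiU])
  · obtain ⟨u, huU, hau⟩ := hclaim U hU hiU
    set U' := insert i (U.erase u) with hU'def
    have hiUe : i ∉ U.erase u := fun h => hiU (Finset.mem_of_mem_erase h)
    have hU'card : U'.card = k := by
      rw [hU'def, Finset.card_insert_of_notMem hiUe, Finset.card_erase_of_mem huU, hU]
      omega
    have hsum : ∑ v ∈ U, a v ≤ ∑ v ∈ U', a v := by
      rw [hU'def, Finset.sum_insert hiUe, ← Finset.sum_erase_add U a huU]
      linarith
    have : ∑ v ∈ U', a v ≤ ∑ v ∈ T, a v := by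
      refine hTmax U' ?_
      simp only [hCdef, Finset.mem_filter, Finset.mem_powersetCard_univ]
      exact ⟨hU'card, Finset.mem_insert_self i _⟩
    linarith
end

section
/- One step of the asynchronous push operation preserves the invariant: if Δ − Δ̂ = (1−s) ⊙ Mᵀ r, where M = (I−(I−R)P)^{-1}R, and we update Δ̂' = Δ̂ + r(i)·(1−s)⊙(R e_i) and r' = r − r(i)(I − Pᵀ(I−R)) e_i, then Δ − Δ̂' = (1−s) ⊙ Mᵀ r'. -/
open Matrix

section Aux

attribute [local instance] Matrix.linftyOpNormedRing Matrix.linftyOpNormedAlgebra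

lemma aux_isUnit {n : ℕ} (α : Fin n → ℝ) (hα : ∀ j, 0 < α j ∧ α j ≤ 1)
    (P : Matrix (Fin n) (Fin n) ℝ) (hP : ∀ i j, 0 ≤ P i j)
    (hrow : ∀ i, ∑ j, P i j = 1) :
    IsUnit (1 - (1 - Matrix.diagonal α) * P) := by
  apply isUnit_one_sub_of_norm_lt_one (x := (1 - Matrix.diagonal α) * P)
  have : ‖(1 - Matrix.diagonal α) * P‖₊ < 1 := by
    rw [Matrix.linfty_opNNNorm_def]
    refine Finset.sup_lt_iff (by norm_num) |>.mpr fun i _ => ?_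
    have hij : ∀ j, (((1 : Matrix (Fin n) (Fin n) ℝ) - Matrix.diagonal α) * P) i j
        = (1 - α i) * P i j := by
      intro j
      have : (1 : Matrix (Fin n) (Fin n) ℝ) - Matrix.diagonal α
          = Matrix.diagonal (fun k => 1 - α k) := by
        rw [← Matrix.diagonal_one, Matrix.diagonal_sub]
      rw [this, Matrix.diagonal_mul]
    have hsum : ∑ j, ‖(((1 : Matrix (Fin n) (Fin n) ℝ) - Matrix.diagonal α) * P) i j‖₊
        = (⟨1 - α i, by linarith [(hα i).2]⟩ : NNReal) := by
      have : ∀ j, ‖(((1 : Matrix (Fin n) (Fin n) ℝ) - Matrix.diagonal α) * P) i j‖₊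
          = (⟨(1 - α i) * P i j, mul_nonneg (by linarith [(hα i).2]) (hP i j)⟩ : NNReal) := by
        intro j
        ext
        simp [hij j, Real.nnnorm_of_nonneg, abs_of_nonneg,
          mul_nonneg (by linarith [(hα i).2] : (0:ℝ) ≤ 1 - α i) (hP i j)]
        rw [abs_of_nonneg (by linarith [(hα i).2] : (0:ℝ) ≤ 1 - α i), abs_of_nonneg (hP i j)]
        rfl
      rw [Finset.sum_congr rfl fun j _ => this j]
      ext
      refine (NNReal.coe_sum _ _).trans ?_
      refine (Finset.sum_congr rfl fun j _ => NNReal.coe_mk ((1 - α i) * P i j) _).trans ?_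
      exact (Finset.mul_sum _ _ _).symm.trans ((congrArg _ (hrow i)).trans (mul_one _))
    rw [hsum]
    have := (hα i).1
    exact_mod_cast show (1 : ℝ) - α i < 1 by linarith
  calc ‖(1 - Matrix.diagonal α) * P‖ = ((‖(1 - Matrix.diagonal α) * P‖₊ : NNReal) : ℝ) := rfl
    _ < 1 := by exact_mod_cast this

end Aux

theorem stmt_12 {n : ℕ} (α : Fin n → ℝ) (hα : ∀ j, 0 < α j ∧ α j ≤ 1)
    (P : Matrix (Fin n) (Fin n) ℝ) (hP : ∀ i j, 0 ≤ P i j)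
    (hrow : ∀ i, ∑ j, P i j = 1)
    (R : Matrix (Fin n) (Fin n) ℝ) (hR : R = Matrix.diagonal α)
    (M : Matrix (Fin n) (Fin n) ℝ) (hM : M = (1 - (1 - R) * P)⁻¹ * R)
    (s : Fin n → ℝ) (hs : ∀ v, 0 ≤ s v ∧ s v ≤ 1)
    (Δ ΔHat ΔHat' r r' : Fin n → ℝ) (i : Fin n)
    (hΔ : ∀ v, Δ v = (1 - s v) * (Mᵀ).mulVec (fun _ => 1) v)
    (hinv : ∀ v, Δ v - ΔHat v = (1 - s v) * (Mᵀ).mulVec r v)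
    (hΔHat' : ∀ v, ΔHat' v = ΔHat v + r i * ((1 - s v) * R.mulVec (Pi.single i 1) v))
    (hr' : r' = r - r i • (1 - Pᵀ * (1 - R)).mulVec (Pi.single i 1)) :
    ∀ v, Δ v - ΔHat' v = (1 - s v) * (Mᵀ).mulVec r' v := by
  have hA : IsUnit (1 - (1 - R) * P) := hR ▸ aux_isUnit α hα P hP hrow
  set A : Matrix (Fin n) (Fin n) ℝ := 1 - (1 - R) * P with hAdef
  have hAdet : IsUnit A.det := (Matrix.isUnit_iff_isUnit_det A).mp hA
  have hRsymm : Rᵀ = R := by rw [hR, Matrix.diagonal_transpose]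
  have hAT : Aᵀ = 1 - Pᵀ * (1 - R) := by
    rw [hAdef, Matrix.transpose_sub, Matrix.transpose_one, Matrix.transpose_mul,
      Matrix.transpose_sub, Matrix.transpose_one, hRsymm]
  have hMT : Mᵀ = R * (Aᵀ)⁻¹ := by
    rw [hM, Matrix.transpose_mul, hRsymm, Matrix.transpose_nonsing_inv]
  have hkey : Mᵀ * (1 - Pᵀ * (1 - R)) = R := by
    rw [← hAT, hMT, Matrix.mul_assoc, Matrix.nonsing_inv_mul _ (by rwa [Matrix.det_transpose]),
      Matrix.mul_one]
  intro v
  have hmul : (Mᵀ).mulVec ((1 - Pᵀ * (1 - R)).mulVec (Pi.single i 1)) v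
      = R.mulVec (Pi.single i 1) v := by
    rw [Matrix.mulVec_mulVec, hkey]
  rw [hr', hΔHat']
  have := hinv v
  simp only [Matrix.mulVec_sub, Matrix.mulVec_smul, Pi.sub_apply, Pi.smul_apply,
    smul_eq_mul, hmul]
  ring_nf
  linarith [hinv v]
end

section
/- One step of the backward asynchronous push preserves its invariant: with M = (I−(I−R)P)^{-1}R, if Δ(v) − (Δ̂(v) + δ) = r_aᵀ M R^{-1} r_s, then after updating δ' = δ + r_a(u)·r_s(u) and r_s' = r_s − r_s(u)(I − (I−R)P) e_u, we have Δ(v) − (Δ̂(v) + δ') = r_aᵀ M R^{-1} r_s'. -/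
open Matrix

attribute [local instance] Matrix.linftyOpNormedRing

theorem stmt_13 {n : ℕ} (α : Fin n → ℝ) (hα : ∀ j, 0 < α j ∧ α j ≤ 1)
    (P : Matrix (Fin n) (Fin n) ℝ) (hP : ∀ i j, 0 ≤ P i j)
    (hrow : ∀ i, ∑ j, P i j = 1)
    (R : Matrix (Fin n) (Fin n) ℝ) (hR : R = Matrix.diagonal α)
    (M : Matrix (Fin n) (Fin n) ℝ) (hM : M = (1 - (1 - R) * P)⁻¹ * R)
    (ra rs rs' : Fin n → ℝ) (u : Fin n)
    (Δv ΔHatv δ δ' : ℝ)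
    (hinv : Δv - (ΔHatv + δ) = ra ⬝ᵥ (M * R⁻¹).mulVec rs)
    (hδ' : δ' = δ + ra u * rs u)
    (hrs' : rs' = rs - rs u • (1 - (1 - R) * P).mulVec (Pi.single u 1)) :
    Δv - (ΔHatv + δ') = ra ⬝ᵥ (M * R⁻¹).mulVec rs' := by
  set B : Matrix (Fin n) (Fin n) ℝ := (1 - R) * P with hB
  have hBentry : ∀ i j, B i j = (1 - α i) * P i j := by
    intro i j
    simp [hB, hR, Matrix.sub_mul, Matrix.one_mul, Matrix.diagonal_mul, sub_mul]
  -- ‖B‖ < 1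
  have hnorm : ‖B‖₊ < 1 := by
    rw [Matrix.linfty_opNNNorm_def]
    refine Finset.sup_lt_iff (by norm_num) |>.2 ?_
    intro i _
    have hcoe : ((∑ j, ‖B i j‖₊ : NNReal) : ℝ) = 1 - α i := by
      have h1 : ∀ j, ((‖B i j‖₊ : NNReal) : ℝ) = (1 - α i) * P i j := by
        intro j
        rw [coe_nnnorm, hBentry]
        exact abs_of_nonneg (mul_nonneg (by linarith [(hα i).2]) (hP i j))
      rw [NNReal.coe_sum]
      simp_rw [h1, ← Finset.mul_sum, hrow i, mul_one]
    have : ((∑ j, ‖B i j‖₊ : NNReal) : ℝ) < 1 := by rw [hcoe]; linarith [(hα i).1]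
    exact_mod_cast this
  have hc : CompleteSpace (Matrix (Fin n) (Fin n) ℝ) := inferInstance
  have : HasSummableGeomSeries (Matrix (Fin n) (Fin n) ℝ) := @instHasSummableGeomSeriesOfCompleteSpace _ _ hc
  have hA : IsUnit (1 - B) := isUnit_one_sub_of_norm_lt_one (by exact_mod_cast hnorm)
  have hAinv : IsUnit (1 - B).det := (Matrix.isUnit_iff_isUnit_det _).1 hA
  have hRu : IsUnit R.det := by
    rw [hR, Matrix.det_diagonal]
    exact isUnit_iff_ne_zero.2 (Finset.prod_ne_zero_iff.2 fun j _ => ne_of_gt (hα j).1)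
  -- M * R⁻¹ = (1 - B)⁻¹
  have hMR : M * R⁻¹ = (1 - B)⁻¹ := by
    rw [hM, Matrix.mul_assoc, Matrix.mul_nonsing_inv _ hRu, Matrix.mul_one]
  have key : (M * R⁻¹).mulVec ((1 - B).mulVec (Pi.single u 1)) = Pi.single u 1 := by
    rw [hMR, Matrix.mulVec_mulVec, Matrix.nonsing_inv_mul _ hAinv, Matrix.one_mulVec]
  rw [hrs', hδ']
  rw [Matrix.mulVec_sub, Matrix.mulVec_smul, key, dotProduct_sub, dotProduct_smul]
  have hsingle : ra ⬝ᵥ Pi.single u 1 = ra u := by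
    simp [dotProduct, Pi.single_apply]
  rw [hsingle, ← hinv, smul_eq_mul]
  ring
end

section
/- Matrix identity: for R = diag(α_i) with α_i ∈ (0,1), D an invertible diagonal matrix, A a matrix with D row sums (i.e., P = D^{-1}A row-stochastic), L = D − A, and Q = D(I−R)^{-1}R, we have (I − (I−R)D^{-1}A)^{-1} R = (Q + L)^{-1} Q. -/
open Matrix

theorem stmt_17 {n : ℕ} (d : Fin n → ℝ) (hd : ∀ i, 0 < d i)
    (D : Matrix (Fin n) (Fin n) ℝ) (hD : D = Matrix.diagonal d)
    (A : Matrix (Fin n) (Fin n) ℝ) (hA : ∀ i j, 0 ≤ A i j)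
    (hrow : ∀ i, ∑ j, A i j = d i)
    (α : Fin n → ℝ) (hα : ∀ i, 0 < α i ∧ α i < 1)
    (R : Matrix (Fin n) (Fin n) ℝ) (hR : R = Matrix.diagonal α)
    (L Q : Matrix (Fin n) (Fin n) ℝ)
    (hL : L = D - A) (hQ : Q = D * (1 - R)⁻¹ * R) :
    (1 - (1 - R) * D⁻¹ * A)⁻¹ * R = (Q + L)⁻¹ * Q := by
  have hDdet : IsUnit D.det := by
    rw [hD, Matrix.det_diagonal]
    exact isUnit_iff_ne_zero.mpr (Finset.prod_ne_zero_iff.mpr fun i _ => (hd i).ne')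
  have h1R : (1 : Matrix (Fin n) (Fin n) ℝ) - R = Matrix.diagonal (fun i => 1 - α i) := by
    rw [hR, ← Matrix.diagonal_one, Matrix.diagonal_sub]
  have hRdet : IsUnit ((1 : Matrix (Fin n) (Fin n) ℝ) - R).det := by
    rw [h1R, Matrix.det_diagonal]
    exact isUnit_iff_ne_zero.mpr
      (Finset.prod_ne_zero_iff.mpr fun i _ => sub_ne_zero.mpr (hα i).2.ne')
  have h1 : ((1 : Matrix (Fin n) (Fin n) ℝ) - R)⁻¹ * (1 - R) = 1 :=
    Matrix.nonsing_inv_mul _ hRdet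
  have h1' : ((1 : Matrix (Fin n) (Fin n) ℝ) - R) * (1 - R)⁻¹ = 1 :=
    Matrix.mul_nonsing_inv _ hRdet
  have h2 : D * D⁻¹ = 1 := Matrix.mul_nonsing_inv _ hDdet
  have h2' : D⁻¹ * D = 1 := Matrix.nonsing_inv_mul _ hDdet
  have key : D * (1 - R)⁻¹ * (1 - (1 - R) * D⁻¹ * A) = Q + L := by
    have e1 : D * (1 - R)⁻¹ * ((1 - R) * D⁻¹ * A) = A := by
      have : D * (1 - R)⁻¹ * ((1 - R) * D⁻¹ * A)
          = D * ((1 - R)⁻¹ * (1 - R)) * (D⁻¹ * A) := by noncomm_ring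
      rw [this, h1, mul_one, ← mul_assoc, h2, one_mul]
    have e2 : D * (1 - R)⁻¹ * ((1 : Matrix (Fin n) (Fin n) ℝ) - R) = D := by
      rw [mul_assoc, h1, mul_one]
    rw [hQ, hL, mul_sub, mul_one, e1]
    have : D * (1 - R)⁻¹ = D * (1 - R)⁻¹ * R + D := by
      calc D * (1 - R)⁻¹ = D * (1 - R)⁻¹ * (R + (1 - R)) := by noncomm_ring
        _ = D * (1 - R)⁻¹ * R + D * (1 - R)⁻¹ * (1 - R) := by rw [mul_add]
        _ = D * (1 - R)⁻¹ * R + D := by rw [e2]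
    conv_lhs => rw [this]
    abel
  rw [← key, Matrix.mul_inv_rev, Matrix.mul_inv_rev,
    Matrix.nonsing_inv_nonsing_inv _ hRdet, hQ]
  symm
  calc (1 - (1 - R) * D⁻¹ * A)⁻¹ * ((1 - R) * D⁻¹) * (D * (1 - R)⁻¹ * R)
      = (1 - (1 - R) * D⁻¹ * A)⁻¹ * ((1 - R) * ((D⁻¹ * D) * (1 - R)⁻¹) * R) := by
        noncomm_ring
    _ = (1 - (1 - R) * D⁻¹ * A)⁻¹ * R := by rw [h2', one_mul, h1', one_mul]
end
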